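/- Eigenvector relation on walk multiplets (converse direction): let H be a real symmetric N×N matrix with orthonormal eigenbasis {φ^ν} such that each eigenvector has definite parity on u,v (i.e., (φ^ν)_u = ±(φ^ν)_v, possibly both zero), eigenvectors with nonzero components on u,v and parity −p have pairwise distinct eigenvalues, and (φ^ν)_u ≠ 0 for those. If g ∈ ℝ^N satisfies (H^k g)_u = p·(H^k g)_v for all k ∈ {0,...,N−1}, then ⟨φ^ν, g⟩ = 0 for every eigenvector φ^ν with (φ^ν)_u = −p·(φ^ν)_v ≠ 0. -/

import Mathlib

open Matrix Polynomial Finset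

/-- Eigenvector relation on walk multiplets (converse direction): if `g` satisfies
the walk-multiplet condition with parity `p` for all powers `k < N`, then `g` is
orthogonal to every eigenvector of parity `−p` with nonzero components on `u,v`
(assuming the corresponding eigenvalues are pairwise distinct). -/
theorem stmt14 {N : ℕ} (H : Matrix (Fin N) (Fin N) ℝ) (hsymm : H.IsSymm)
    (u v : Fin N) (p : ℝ) (hp : p = 1 ∨ p = -1)
    (φ : Fin N → (Fin N → ℝ)) (lam : Fin N → ℝ)
    (hortho : ∀ ν μ : Fin N, dotProduct (φ ν) (φ μ) = if ν = μ then 1 else 0)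
    (heig : ∀ ν : Fin N, H.mulVec (φ ν) = lam ν • φ ν)
    (hparity : ∀ ν : Fin N, φ ν u = φ ν v ∨ φ ν u = -(φ ν v))
    (hdistinct : ∀ ν μ : Fin N, ν ≠ μ →
      (φ ν u = -p * φ ν v ∧ φ ν u ≠ 0) →
      (φ μ u = -p * φ μ v ∧ φ μ u ≠ 0) → lam ν ≠ lam μ)
    (g : Fin N → ℝ)
    (hmul : ∀ k : ℕ, k < N → ((H ^ k).mulVec g) u = p * ((H ^ k).mulVec g) v) :
    ∀ ν : Fin N, φ ν u = -p * φ ν v → φ ν u ≠ 0 → dotProduct (φ ν) g = 0 := by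
  have hp2 : p * p = 1 := by rcases hp with h | h <;> rw [h] <;> ring
  -- completeness: any vector expands in the basis
  set Φ : Matrix (Fin N) (Fin N) ℝ := Matrix.of (fun ν i => φ ν i) with hΦ
  have h1 : Φ * Φᵀ = 1 := by
    ext ν μ
    simpa [Matrix.mul_apply, Matrix.one_apply, dotProduct, hΦ] using hortho ν μ
  have h2 : Φᵀ * Φ = 1 := mul_eq_one_comm.mp h1
  have hcomp : ∀ (x : Fin N → ℝ) (i : Fin N),
      x i = ∑ μ, φ μ i * dotProduct (φ μ) x := by
    intro x i
    have h3 := congrArg (fun M => (Matrix.mulVec M x) i) h2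
    simp only [Matrix.one_mulVec] at h3
    rw [← h3]
    rw [← Matrix.mulVec_mulVec]
    simp [Matrix.mulVec, dotProduct, hΦ, Matrix.transpose_apply]
  -- eigen-expansion of powers
  have hHk : ∀ (k : ℕ) (μ : Fin N),
      dotProduct (φ μ) ((H ^ k).mulVec g)
        = lam μ ^ k * dotProduct (φ μ) g := by
    intro k μ
    induction k with
    | zero => simp
    | succ k ih =>
      have hv : H.vecMul (φ μ) = lam μ • φ μ := by
        rw [← Matrix.mulVec_transpose, hsymm.eq, heig]
      rw [pow_succ', ← Matrix.mulVec_mulVec, Matrix.dotProduct_mulVec, hv,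
        smul_dotProduct, ih, pow_succ, smul_eq_mul]
      ring
  -- the set of bad eigenvectors
  set S : Finset (Fin N) := Finset.univ.filter (fun μ => φ μ u = -p * φ μ v ∧ φ μ u ≠ 0)
    with hS
  have hoffS : ∀ μ : Fin N, μ ∉ S → φ μ u - p * φ μ v = 0 := by
    intro μ hμ
    simp only [hS, Finset.mem_filter, Finset.mem_univ, true_and, not_and, ne_eq,
      not_not] at hμ
    rcases hparity μ with h | h <;> rcases hp with hp1 | hp1 <;> subst hp1
    · rw [h]; ring
    · have h0 : φ μ u = 0 := hμ (by rw [h]; ring)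
      rw [h0] at h; rw [h0, ← h]; ring
    · have h0 : φ μ u = 0 := hμ (by rw [h]; ring)
      rw [h0] at h
      rw [h0, neg_eq_iff_eq_neg.mp h.symm]; ring
    · rw [h]; ring
  have honS : ∀ μ ∈ S, φ μ u - p * φ μ v = 2 * φ μ u := by
    intro μ hμ
    simp only [hS, Finset.mem_filter, Finset.mem_univ, true_and] at hμ
    have : p * φ μ v = -φ μ u := by
      have := hμ.1
      nlinarith [hp2]
    rw [this]; ring
  -- the Vandermonde system
  set c : Fin N → ℝ := fun μ => dotProduct (φ μ) g with hc
  have hsys : ∀ k : ℕ, k < N → ∑ μ ∈ S, lam μ ^ k * (2 * φ μ u * c μ) = 0 := by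
    intro k hk
    have e1 : ((H ^ k).mulVec g) u - p * ((H ^ k).mulVec g) v = 0 := by
      rw [hmul k hk]; ring
    rw [hcomp ((H ^ k).mulVec g) u, hcomp ((H ^ k).mulVec g) v, Finset.mul_sum,
      ← Finset.sum_sub_distrib] at e1
    have e2 : ∀ μ : Fin N,
        φ μ u * dotProduct (φ μ) ((H ^ k).mulVec g)
          - p * (φ μ v * dotProduct (φ μ) ((H ^ k).mulVec g))
        = (φ μ u - p * φ μ v) * (lam μ ^ k * c μ) := by
      intro μ; rw [hHk k μ]; ring
    simp only [e2] at e1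
    rw [← Finset.sum_filter_add_sum_filter_not Finset.univ
      (fun μ => φ μ u = -p * φ μ v ∧ φ μ u ≠ 0)] at e1
    have e3 : ∑ μ ∈ Finset.univ.filter
        (fun μ => ¬(φ μ u = -p * φ μ v ∧ φ μ u ≠ 0)),
        (φ μ u - p * φ μ v) * (lam μ ^ k * c μ) = 0 := by
      apply Finset.sum_eq_zero
      intro μ hμ
      have hμ' : ¬(φ μ u = -p * φ μ v ∧ φ μ u ≠ 0) := (Finset.mem_filter.mp hμ).2
      have hns : μ ∉ S := by
        rw [hS]
        intro hcon
        exact hμ' (Finset.mem_filter.mp hcon).2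
      rw [hoffS μ hns, zero_mul]
    rw [e3, add_zero] at e1
    rw [← e1]
    apply Finset.sum_congr rfl
    intro μ hμ
    rw [honS μ hμ]
    ring
  -- polynomial argument
  intro ν hν1 hν2
  have hνS : ν ∈ S := by
    rw [hS]; exact Finset.mem_filter.mpr ⟨Finset.mem_univ ν, hν1, hν2⟩
  set P : Polynomial ℝ := ∏ μ ∈ S.erase ν, (X - C (lam μ)) with hP
  have hdeg : P.natDegree < N := by
    have h4 : P.natDegree = (S.erase ν).card := by
      rw [hP]
      rw [Polynomial.natDegree_prod _ _ (fun μ _ => X_sub_C_ne_zero (lam μ))]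
      simp [Polynomial.natDegree_X_sub_C]
    rw [h4]
    calc (S.erase ν).card < S.card := Finset.card_erase_lt_of_mem hνS
      _ ≤ Fintype.card (Fin N) := Finset.card_le_univ S
      _ = N := Fintype.card_fin N
  have hsum0 : ∑ μ ∈ S, P.eval (lam μ) * (2 * φ μ u * c μ) = 0 := by
    have e : ∀ μ ∈ S, P.eval (lam μ) * (2 * φ μ u * c μ)
        = ∑ k ∈ Finset.range N, P.coeff k * (lam μ ^ k * (2 * φ μ u * c μ)) := by
      intro μ _
      rw [Polynomial.eval_eq_sum_range' hdeg, Finset.sum_mul]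
      apply Finset.sum_congr rfl
      intro k _
      ring
    rw [Finset.sum_congr rfl e, Finset.sum_comm]
    apply Finset.sum_eq_zero
    intro k hk
    rw [← Finset.mul_sum, hsys k (Finset.mem_range.mp hk), mul_zero]
  have hsingle : ∑ μ ∈ S, P.eval (lam μ) * (2 * φ μ u * c μ)
      = P.eval (lam ν) * (2 * φ ν u * c ν) := by
    apply Finset.sum_eq_single_of_mem ν hνS
    intro μ hμ hne
    have : P.eval (lam μ) = 0 := by
      rw [hP, Polynomial.eval_prod]
      apply Finset.prod_eq_zero (Finset.mem_erase.mpr ⟨hne, hμ⟩)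
      simp
    rw [this, zero_mul]
  have hevne : P.eval (lam ν) ≠ 0 := by
    rw [hP, Polynomial.eval_prod]
    apply Finset.prod_ne_zero_iff.mpr
    intro μ hμ
    obtain ⟨hne, hμS⟩ := Finset.mem_erase.mp hμ
    simp only [Polynomial.eval_sub, Polynomial.eval_X, Polynomial.eval_C, sub_ne_zero]
    have hμ' := Finset.mem_filter.mp hμS
    exact hdistinct ν μ (Ne.symm hne) ⟨hν1, hν2⟩ hμ'.2
  rw [hsingle] at hsum0
  have : 2 * φ ν u * c ν = 0 := by
    rcases mul_eq_zero.mp hsum0 with h | h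
    · exact absurd h hevne
    · exact h
  have : φ ν u * c ν = 0 := by linarith
  rcases mul_eq_zero.mp this with h | h
  · exact absurd h hν2
  · exact h
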